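/- Let Γ̂ be the 4-cycle a — b — a' — b' — a with vertex weights f(a) = f(a') = 9, f(b) = f(b') = 1 and all four edge weights equal to 1. Then the two 2-partitions {{a,b},{a',b'}} and {{a,b'},{a',b}} (each district consisting of one weight-9 and one adjacent weight-1 vertex, hence of mass 10, with cut energy 2 and deviation energy 0) minimize F_λ for every λ ∈ [0,1], and for every λ ∈ (0,1) they are the only minimal 2-partitions of Γ̂. -/
import Mathlib


open Finset

namespace Districting

variable {V : Type*} [Fintype V] [DecidableEq V]

/-- An `N`-partition of a graph `G`: a family of `N` pairwise disjoint sets of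
vertexes covering all of `V`, each inducing a connected subgraph of `G`. -/
structure Partition (G : SimpleGraph V) (N : ℕ) where
  part : Fin N → Finset V
  disj : ∀ k l, k ≠ l → Disjoint (part k) (part l)
  covers : ∀ v : V, ∃ k, v ∈ part k
  connected : ∀ k, (G.induce (part k : Set V)).Connected

/-- The mass of a set of vertexes w.r.t. the vertex weight `f`. -/
def mass (f : V → ℝ) (s : Finset V) : ℝ := ∑ v ∈ s, f v

/-- The total mass of the graph w.r.t. the vertex weight `f`. -/
def totalMass (f : V → ℝ) : ℝ := ∑ v : V, f v

open Classical in
/-- The cut (perimeter) energy of a partition: the sum of the weights of edges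
whose endpoints lie in different parts. -/
noncomputable def cutEnergy (G : SimpleGraph V) (g : Sym2 V → ℝ) {N : ℕ}
    (P : Partition G N) : ℝ :=
  ∑ e : Sym2 V,
    if e ∈ G.edgeSet ∧ ∀ k, ¬ (∀ v ∈ e, v ∈ P.part k) then g e else 0

/-- The deviation energy of a partition: the standard deviation of the masses
from the mean mass. -/
noncomputable def deviation {G : SimpleGraph V} (f : V → ℝ) {N : ℕ}
    (P : Partition G N) : ℝ :=
  Real.sqrt (∑ k : Fin N, (mass f (P.part k) - totalMass f / (N : ℝ)) ^ 2)

/-- The energy functional `F_λ`. -/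
noncomputable def energy (G : SimpleGraph V) (f : V → ℝ) (g : Sym2 V → ℝ)
    (lam : ℝ) {N : ℕ} (P : Partition G N) : ℝ :=
  lam * cutEnergy G g P + (1 - lam) * deviation f P

end Districting

namespace Districting

/-- The 4-cycle `a — b — a' — b' — a`, with `a = 0`, `b = 1`, `a' = 2`, `b' = 3`. -/
def cycleGraph4 : SimpleGraph (Fin 4) :=
  SimpleGraph.fromRel (fun u v => v = u + 1)


lemma edgeSet_eq : cycleGraph4.edgeSet = {s(0,1), s(1,2), s(2,3), s(0,3)} := by
  ext e
  induction e using Sym2.ind with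
  | _ x y =>
    simp only [SimpleGraph.mem_edgeSet, cycleGraph4, SimpleGraph.fromRel_adj,
      Set.mem_insert_iff, Set.mem_singleton_iff, Sym2.eq_iff]
    revert x y; decide

lemma compl_part (Q : Partition cycleGraph4 2) : Q.part 1 = (Q.part 0)ᶜ := by
  ext v
  simp only [Finset.mem_compl]
  constructor
  · intro h1 h0
    exact (Finset.disjoint_left.mp (Q.disj 0 1 (by decide)) h0) h1
  · intro h0
    rcases Q.covers v with ⟨k, hk⟩
    fin_cases k
    · exact absurd hk h0
    · exact hk

lemma cut_formula (g : Sym2 (Fin 4) → ℝ) (hg : ∀ e ∈ cycleGraph4.edgeSet, g e = 1)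
    (Q : Partition cycleGraph4 2) :
    cutEnergy cycleGraph4 g Q =
      (if ((0:Fin 4) ∈ Q.part 0 ↔ (1:Fin 4) ∈ Q.part 0) then 0 else 1) +
      (if ((1:Fin 4) ∈ Q.part 0 ↔ (2:Fin 4) ∈ Q.part 0) then 0 else 1) +
      (if ((2:Fin 4) ∈ Q.part 0 ↔ (3:Fin 4) ∈ Q.part 0) then 0 else 1) +
      (if ((0:Fin 4) ∈ Q.part 0 ↔ (3:Fin 4) ∈ Q.part 0) then 0 else 1) := by
  classical
  have hE : ∀ e : Sym2 (Fin 4), e ∈ cycleGraph4.edgeSet ↔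
      e ∈ ({s(0,1), s(1,2), s(2,3), s((0:Fin 4),3)} : Finset (Sym2 (Fin 4))) := by
    rw [edgeSet_eq]; intro e; simp
  have hcross : ∀ u v : Fin 4,
      ((∀ k, ¬ (∀ w ∈ s(u,v), w ∈ Q.part k)) ↔ ¬ (u ∈ Q.part 0 ↔ v ∈ Q.part 0)) := by
    intro u v
    have h1 := compl_part Q
    constructor
    · intro h hiff
      by_cases hu : u ∈ Q.part 0
      · refine h 0 ?_
        intro w hw
        rcases Sym2.mem_iff.mp hw with rfl | rfl
        · exact hu
        · exact hiff.mp hu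
      · refine h 1 ?_
        intro w hw
        rw [h1, Finset.mem_compl]
        rcases Sym2.mem_iff.mp hw with rfl | rfl
        · exact hu
        · exact fun hv => hu (hiff.mpr hv)
    · intro h k hk
      have hu := hk u (Sym2.mem_mk_left u v)
      have hv := hk v (Sym2.mem_mk_right u v)
      rcases (by decide : ∀ k : Fin 2, k = 0 ∨ k = 1) k with rfl | rfl
      · exact h ⟨fun _ => hv, fun _ => hu⟩
      · rw [h1, Finset.mem_compl] at hu hv
        exact h ⟨fun h0 => absurd h0 hu, fun h0 => absurd h0 hv⟩
  rw [cutEnergy]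
  rw [← Finset.sum_subset (Finset.subset_univ
      ({s(0,1), s(1,2), s(2,3), s((0:Fin 4),3)} : Finset (Sym2 (Fin 4))))
      (fun e _ he => by rw [if_neg]; rintro ⟨h1, -⟩; exact he ((hE e).mp h1))]
  have h01 : s((0:Fin 4),1) ∈ cycleGraph4.edgeSet := by rw [hE]; decide
  have h12 : s((1:Fin 4),2) ∈ cycleGraph4.edgeSet := by rw [hE]; decide
  have h23 : s((2:Fin 4),3) ∈ cycleGraph4.edgeSet := by rw [hE]; decide
  have h03 : s((0:Fin 4),3) ∈ cycleGraph4.edgeSet := by rw [hE]; decide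
  rw [show ({s(0,1), s(1,2), s(2,3), s((0:Fin 4),3)} : Finset (Sym2 (Fin 4)))
      = insert s(0,1) (insert s(1,2) (insert s(2,3) {s((0:Fin 4),3)})) from rfl]
  rw [Finset.sum_insert (by decide), Finset.sum_insert (by decide),
      Finset.sum_insert (by decide), Finset.sum_singleton]
  rw [hg _ h01, hg _ h12, hg _ h23, hg _ h03]
  simp only [h01, h12, h23, h03, true_and, hcross]
  by_cases a : (0:Fin 4) ∈ Q.part 0 ↔ (1:Fin 4) ∈ Q.part 0 <;>
  by_cases b : (1:Fin 4) ∈ Q.part 0 ↔ (2:Fin 4) ∈ Q.part 0 <;>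
  by_cases c : (2:Fin 4) ∈ Q.part 0 ↔ (3:Fin 4) ∈ Q.part 0 <;>
  by_cases d : (0:Fin 4) ∈ Q.part 0 ↔ (3:Fin 4) ∈ Q.part 0 <;>
  simp [a, b, c, d] <;> ring

lemma pair_connected (a b : Fin 4) (hab : cycleGraph4.Adj a b) :
    (cycleGraph4.induce (({a, b} : Finset (Fin 4)) : Set (Fin 4))).Connected := by
  rw [SimpleGraph.connected_iff]
  refine ⟨?_, ⟨⟨a, by simp⟩⟩⟩
  rintro ⟨u, hu⟩ ⟨v, hv⟩
  simp only [Finset.coe_insert, Finset.coe_singleton, Set.mem_insert_iff,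
    Set.mem_singleton_iff] at hu hv
  rcases hu with rfl | rfl <;> rcases hv with rfl | rfl
  · exact SimpleGraph.Reachable.refl _
  · exact SimpleGraph.Adj.reachable (by simpa using hab)
  · exact SimpleGraph.Adj.reachable (by simpa using hab.symm)
  · exact SimpleGraph.Reachable.refl _

lemma mass_ten_iff (f : Fin 4 → ℝ) (hf₀ : f 0 = 9) (hf₁ : f 1 = 1) (hf₂ : f 2 = 9)
    (hf₃ : f 3 = 1) (s : Finset (Fin 4)) :
    (∑ v ∈ s, f v) = 10 ↔
      s = {0,1} ∨ s = {1,2} ∨ s = {2,3} ∨ s = {0,3} := by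
  have hs : s ∈ (Finset.univ : Finset (Finset (Fin 4))) := mem_univ s
  fin_cases hs <;>
    simp_all [Finset.sum_insert, Finset.sum_singleton] <;> norm_num <;> decide

lemma cut_ge_two (s : Finset (Fin 4)) (h1 : s.Nonempty) (h2 : sᶜ.Nonempty) :
    (2:ℝ) ≤ (if ((0:Fin 4) ∈ s ↔ (1:Fin 4) ∈ s) then 0 else 1) +
      (if ((1:Fin 4) ∈ s ↔ (2:Fin 4) ∈ s) then 0 else 1) +
      (if ((2:Fin 4) ∈ s ↔ (3:Fin 4) ∈ s) then 0 else 1) +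
      (if ((0:Fin 4) ∈ s ↔ (3:Fin 4) ∈ s) then 0 else 1) := by
  have hs : s ∈ (Finset.univ : Finset (Finset (Fin 4))) := mem_univ s
  fin_cases hs <;>
    first
    | exact absurd h1 (by decide)
    | exact absurd h2 (by decide)
    | (simp (config := { decide := true }) only [Finset.mem_insert, Finset.mem_singleton]; norm_num)


lemma part_nonempty (Q : Partition cycleGraph4 2) (k : Fin 2) : (Q.part k).Nonempty := by
  obtain ⟨⟨v, hv⟩⟩ := (Q.connected k).nonempty
  exact ⟨v, Finset.mem_coe.mp hv⟩

lemma totalMass_eq (f : Fin 4 → ℝ) (hf₀ : f 0 = 9) (hf₁ : f 1 = 1) (hf₂ : f 2 = 9)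
    (hf₃ : f 3 = 1) : totalMass f = 20 := by
  simp [totalMass, Fin.sum_univ_four, hf₀, hf₁, hf₂, hf₃]
  norm_num

lemma deviation_eq (f : Fin 4 → ℝ) (hf₀ : f 0 = 9) (hf₁ : f 1 = 1) (hf₂ : f 2 = 9)
    (hf₃ : f 3 = 1) (Q : Partition cycleGraph4 2) :
    deviation f Q = Real.sqrt (2 * (mass f (Q.part 0) - 10) ^ 2) := by
  have htot := totalMass_eq f hf₀ hf₁ hf₂ hf₃
  have hm1 : mass f (Q.part 1) = 20 - mass f (Q.part 0) := by
    have := Finset.sum_add_sum_compl (Q.part 0) f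
    rw [compl_part Q]
    simp only [mass]
    rw [← htot, totalMass] at *
    linarith
  rw [deviation, Fin.sum_univ_two, htot, hm1]
  ring_nf

lemma deviation_zero_iff (f : Fin 4 → ℝ) (hf₀ : f 0 = 9) (hf₁ : f 1 = 1) (hf₂ : f 2 = 9)
    (hf₃ : f 3 = 1) (Q : Partition cycleGraph4 2) :
    deviation f Q = 0 ↔ mass f (Q.part 0) = 10 := by
  rw [deviation_eq f hf₀ hf₁ hf₂ hf₃ Q]
  constructor
  · intro h
    have h2 : 2 * (mass f (Q.part 0) - 10) ^ 2 ≤ 0 := by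
      by_contra hc
      push_neg at hc
      exact absurd h (by positivity)
    have h3 : (mass f (Q.part 0) - 10) ^ 2 = 0 :=
      le_antisymm (by linarith) (sq_nonneg _)
    have := pow_eq_zero_iff (n := 2) (by norm_num) |>.mp h3
    linarith
  · intro h
    rw [h]
    norm_num

lemma cut_eq_two (g : Sym2 (Fin 4) → ℝ) (hg : ∀ e ∈ cycleGraph4.edgeSet, g e = 1)
    (Q : Partition cycleGraph4 2)
    (h : Q.part 0 = {0,1} ∨ Q.part 0 = {1,2} ∨ Q.part 0 = {2,3} ∨ Q.part 0 = {0,3}) :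
    cutEnergy cycleGraph4 g Q = 2 := by
  rw [cut_formula g hg Q]
  rcases h with h | h | h | h <;> rw [h] <;>
    simp (config := { decide := true }) only [Finset.mem_insert, Finset.mem_singleton] <;>
    norm_num

lemma cut_ge_two' (g : Sym2 (Fin 4) → ℝ) (hg : ∀ e ∈ cycleGraph4.edgeSet, g e = 1)
    (Q : Partition cycleGraph4 2) : (2:ℝ) ≤ cutEnergy cycleGraph4 g Q := by
  rw [cut_formula g hg Q]
  refine cut_ge_two (Q.part 0) (part_nonempty Q 0) ?_
  rw [← compl_part Q]
  exact part_nonempty Q 1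

lemma mass_pair (f : Fin 4 → ℝ) (hf₀ : f 0 = 9) (hf₁ : f 1 = 1) (hf₂ : f 2 = 9)
    (hf₃ : f 3 = 1) (Q : Partition cycleGraph4 2)
    (h : Q.part 0 = {0,1} ∨ Q.part 0 = {1,2} ∨ Q.part 0 = {2,3} ∨ Q.part 0 = {0,3}) :
    mass f (Q.part 0) = 10 := by
  rw [mass]
  exact (mass_ten_iff f hf₀ hf₁ hf₂ hf₃ _).mpr h

lemma energy_lb (f : Fin 4 → ℝ) (g : Sym2 (Fin 4) → ℝ)
    (hg : ∀ e ∈ cycleGraph4.edgeSet, g e = 1) (lam : ℝ) (h0 : 0 ≤ lam) (h1 : lam ≤ 1)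
    (Q : Partition cycleGraph4 2) : 2 * lam ≤ energy cycleGraph4 f g lam Q := by
  have hc := cut_ge_two' g hg Q
  have hd : 0 ≤ deviation f Q := Real.sqrt_nonneg _
  rw [energy]
  nlinarith

lemma range_fin2 {α : Type*} (p : Fin 2 → α) : Set.range p = {p 0, p 1} := by
  ext x
  constructor
  · rintro ⟨k, rfl⟩
    fin_cases k <;> simp
  · rintro (rfl | rfl) <;> exact Set.mem_range_self _


lemma adj01 : cycleGraph4.Adj 0 1 := by
  rw [cycleGraph4, SimpleGraph.fromRel_adj]; decide

lemma adj23 : cycleGraph4.Adj 2 3 := by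
  rw [cycleGraph4, SimpleGraph.fromRel_adj]; decide

lemma adj03 : cycleGraph4.Adj 0 3 := by
  rw [cycleGraph4, SimpleGraph.fromRel_adj]; decide

lemma adj12 : cycleGraph4.Adj 1 2 := by
  rw [cycleGraph4, SimpleGraph.fromRel_adj]; decide

/-- Build a 2-partition from two adjacent-pair finsets. -/
def mkPartition (a b c d : Fin 4) (hab : cycleGraph4.Adj a b) (hcd : cycleGraph4.Adj c d)
    (hdisj : Disjoint ({a, b} : Finset (Fin 4)) {c, d})
    (hcov : ∀ v : Fin 4, v ∈ ({a, b} : Finset (Fin 4)) ∨ v ∈ ({c, d} : Finset (Fin 4))) :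
    Partition cycleGraph4 2 where
  part := ![{a, b}, {c, d}]
  disj := by
    intro k l hkl
    fin_cases k <;> fin_cases l
    · exact absurd rfl hkl
    · exact hdisj
    · exact hdisj.symm
    · exact absurd rfl hkl
  covers := by
    intro v
    rcases hcov v with h | h
    · exact ⟨0, h⟩
    · exact ⟨1, h⟩
  connected := by
    intro k
    fin_cases k
    · exact pair_connected a b hab
    · exact pair_connected c d hcd

lemma range_mkPartition (a b c d : Fin 4) (hab hcd hdisj hcov) :
    Set.range (mkPartition a b c d hab hcd hdisj hcov).part
      = {({a, b} : Finset (Fin 4)), ({c, d} : Finset (Fin 4))} := by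
  rw [range_fin2]
  rfl

lemma parts_of_range (P : Partition cycleGraph4 2) (A B : Finset (Fin 4)) (hAB : A ≠ B)
    (h : Set.range P.part = {A, B}) :
    (P.part 0 = A ∧ P.part 1 = B) ∨ (P.part 0 = B ∧ P.part 1 = A) := by
  rw [range_fin2] at h
  have h0 : P.part 0 ∈ ({A, B} : Set (Finset (Fin 4))) := h ▸ (by simp)
  have h1 : P.part 1 ∈ ({A, B} : Set (Finset (Fin 4))) := h ▸ (by simp)
  have hA : A ∈ ({P.part 0, P.part 1} : Set (Finset (Fin 4))) := by rw [h]; simp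
  have hB : B ∈ ({P.part 0, P.part 1} : Set (Finset (Fin 4))) := by rw [h]; simp
  simp only [Set.mem_insert_iff, Set.mem_singleton_iff] at h0 h1 hA hB
  rcases h0 with h0 | h0 <;> rcases h1 with h1 | h1
  · exact absurd (hB.elim (fun hB => hB.trans h0) (fun hB => hB.trans h1)).symm hAB
  · exact Or.inl ⟨h0, h1⟩
  · exact Or.inr ⟨h0, h1⟩
  · exact absurd (hA.elim (fun hA => hA.trans h0) (fun hA => hA.trans h1)) hAB

/-- Example `+-vertex`, graph `Γ̂`: on the 4-cycle with vertex
weights `9, 1, 9, 1` and unit edge weights, the two balanced `2`-partitions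
`{{a,b},{a',b'}}` and `{{a,b'},{a',b}}` (mass `10`, cut energy `2`, deviation `0`)
minimize `F_λ` for every `λ ∈ [0,1]`, and for `λ ∈ (0,1)` they are the only
minimal `2`-partitions. -/
theorem cycle4_minimal_partitions
    (f : Fin 4 → ℝ) (hf₀ : f 0 = 9) (hf₁ : f 1 = 1) (hf₂ : f 2 = 9) (hf₃ : f 3 = 1)
    (g : Sym2 (Fin 4) → ℝ) (hg : ∀ e ∈ cycleGraph4.edgeSet, g e = 1) :
    (∃ P : Partition cycleGraph4 2,
        Set.range P.part
          = ({({0, 1} : Finset (Fin 4)), ({2, 3} : Finset (Fin 4))} :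
              Set (Finset (Fin 4)))) ∧
      (∃ P : Partition cycleGraph4 2,
        Set.range P.part
          = ({({0, 3} : Finset (Fin 4)), ({1, 2} : Finset (Fin 4))} :
              Set (Finset (Fin 4)))) ∧
      (∀ P : Partition cycleGraph4 2,
        (Set.range P.part
            = ({({0, 1} : Finset (Fin 4)), ({2, 3} : Finset (Fin 4))} :
                Set (Finset (Fin 4))) ∨
          Set.range P.part
            = ({({0, 3} : Finset (Fin 4)), ({1, 2} : Finset (Fin 4))} :
                Set (Finset (Fin 4)))) →
        cutEnergy cycleGraph4 g P = 2 ∧ deviation f P = 0 ∧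
          ∀ lam ∈ Set.Icc (0 : ℝ) 1, ∀ Q : Partition cycleGraph4 2,
            energy cycleGraph4 f g lam P ≤ energy cycleGraph4 f g lam Q) ∧
      (∀ lam : ℝ, 0 < lam → lam < 1 → ∀ P : Partition cycleGraph4 2,
        (∀ Q : Partition cycleGraph4 2,
            energy cycleGraph4 f g lam P ≤ energy cycleGraph4 f g lam Q) ↔
          (Set.range P.part
              = ({({0, 1} : Finset (Fin 4)), ({2, 3} : Finset (Fin 4))} :
                  Set (Finset (Fin 4))) ∨
            Set.range P.part
              = ({({0, 3} : Finset (Fin 4)), ({1, 2} : Finset (Fin 4))} :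
                  Set (Finset (Fin 4))))) := by
  have hd1 : Disjoint ({0, 1} : Finset (Fin 4)) {2, 3} := by decide
  have hc1 : ∀ v : Fin 4, v ∈ ({0, 1} : Finset (Fin 4)) ∨ v ∈ ({2, 3} : Finset (Fin 4)) := by
    decide
  have hd2 : Disjoint ({0, 3} : Finset (Fin 4)) {1, 2} := by decide
  have hc2 : ∀ v : Fin 4, v ∈ ({0, 3} : Finset (Fin 4)) ∨ v ∈ ({1, 2} : Finset (Fin 4)) := by
    decide
  set P₁ := mkPartition 0 1 2 3 adj01 adj23 hd1 hc1 with hP₁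
  set P₂ := mkPartition 0 3 1 2 adj03 adj12 hd2 hc2 with hP₂
  have hr1 : Set.range P₁.part
      = ({({0, 1} : Finset (Fin 4)), ({2, 3} : Finset (Fin 4))} : Set (Finset (Fin 4))) :=
    range_mkPartition 0 1 2 3 adj01 adj23 hd1 hc1
  have hr2 : Set.range P₂.part
      = ({({0, 3} : Finset (Fin 4)), ({1, 2} : Finset (Fin 4))} : Set (Finset (Fin 4))) :=
    range_mkPartition 0 3 1 2 adj03 adj12 hd2 hc2
  -- the key fact: balanced range implies part 0 is one of the four balanced sets
  have key : ∀ P : Partition cycleGraph4 2,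
      (Set.range P.part
          = ({({0, 1} : Finset (Fin 4)), ({2, 3} : Finset (Fin 4))} : Set (Finset (Fin 4))) ∨
        Set.range P.part
          = ({({0, 3} : Finset (Fin 4)), ({1, 2} : Finset (Fin 4))} : Set (Finset (Fin 4)))) →
      cutEnergy cycleGraph4 g P = 2 ∧ deviation f P = 0 := by
    intro P hP
    have h4 : P.part 0 = {0, 1} ∨ P.part 0 = {1, 2} ∨ P.part 0 = {2, 3} ∨ P.part 0 = {0, 3} := by
      rcases hP with h | h
      · rcases parts_of_range P _ _ (by decide) h with ⟨h0, -⟩ | ⟨h0, -⟩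
        · exact Or.inl h0
        · exact Or.inr (Or.inr (Or.inl h0))
      · rcases parts_of_range P _ _ (by decide) h with ⟨h0, -⟩ | ⟨h0, -⟩
        · exact Or.inr (Or.inr (Or.inr h0))
        · exact Or.inr (Or.inl h0)
    exact ⟨cut_eq_two g hg P h4,
      (deviation_zero_iff f hf₀ hf₁ hf₂ hf₃ P).mpr (mass_pair f hf₀ hf₁ hf₂ hf₃ P h4)⟩
  have henergy : ∀ P : Partition cycleGraph4 2,
      cutEnergy cycleGraph4 g P = 2 → deviation f P = 0 →
      ∀ lam : ℝ, energy cycleGraph4 f g lam P = 2 * lam := by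
    intro P hcut hdev lam
    rw [energy, hcut, hdev]
    ring
  refine ⟨⟨P₁, hr1⟩, ⟨P₂, hr2⟩, ?_, ?_⟩
  · intro P hP
    obtain ⟨hcut, hdev⟩ := key P hP
    refine ⟨hcut, hdev, ?_⟩
    intro lam hlam Q
    rw [henergy P hcut hdev lam]
    exact energy_lb f g hg lam hlam.1 hlam.2 Q
  · intro lam hl0 hl1 P
    constructor
    · intro hmin
      obtain ⟨hcut1, hdev1⟩ := key P₁ (Or.inl hr1)
      have hE1 := hmin P₁
      rw [henergy P₁ hcut1 hdev1 lam] at hE1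
      have hcP := cut_ge_two' g hg P
      have hdP : 0 ≤ deviation f P := Real.sqrt_nonneg _
      rw [energy] at hE1
      have hdev : deviation f P = 0 := by nlinarith
      have hm : mass f (P.part 0) = 10 := (deviation_zero_iff f hf₀ hf₁ hf₂ hf₃ P).mp hdev
      rw [mass] at hm
      have h4 := (mass_ten_iff f hf₀ hf₁ hf₂ hf₃ (P.part 0)).mp hm
      have hcompl := compl_part P
      rw [range_fin2, hcompl]
      rcases h4 with h0 | h0 | h0 | h0 <;> rw [h0]
      · exact Or.inl (by rw [show ({0, 1} : Finset (Fin 4))ᶜ = {2, 3} from by decide])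
      · exact Or.inr (by
          rw [show ({1, 2} : Finset (Fin 4))ᶜ = {0, 3} from by decide, Set.pair_comm])
      · exact Or.inl (by
          rw [show ({2, 3} : Finset (Fin 4))ᶜ = {0, 1} from by decide, Set.pair_comm])
      · exact Or.inr (by rw [show ({0, 3} : Finset (Fin 4))ᶜ = {1, 2} from by decide])
    · intro hP Q
      obtain ⟨hcut, hdev⟩ := key P hP
      rw [henergy P hcut hdev lam]
      exact energy_lb f g hg lam (le_of_lt hl0) (le_of_lt hl1) Q


end Districting
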